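/- Let u : ℕ → ℝ with u ∈ Λ. Then Δˢ_u ≠ ∅ if and only if there exists k ∈ ℕ with u_k > L(u). -/
import Mathlib


open Set Filter

/-- `V u` is the supremum of the sequence `u` (real `sSup`, junk value if unbounded). -/
noncomputable def V (u : ℕ → ℝ) : ℝ := sSup (Set.range u)

/-- `L u` is the limit superior of `u` taken in the extended reals. -/
noncomputable def L (u : ℕ → ℝ) : EReal :=
  Filter.limsup (fun n => ((u n : ℝ) : EReal)) Filter.atTop

/-- `u ∈ Λ` : the supremum of `u` is finite, i.e. `u` is bounded above. -/
def MemLambda (u : ℕ → ℝ) : Prop := BddAbove (Set.range u)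

/-- `Δ_u = {k : max_{0 ≤ j ≤ k} u_j ≥ sup_{j > k} u_j}`. -/
noncomputable def Delta (u : ℕ → ℝ) : Set ℕ :=
  {k | sSup (u '' Set.Ioi k) ≤ sSup (u '' Set.Iic k)}

/-- `Δˢ_u = {k : max_{0 ≤ j ≤ k} u_j > sup_{j > k} u_j}`. -/
noncomputable def DeltaS (u : ℕ → ℝ) : Set ℕ :=
  {k | sSup (u '' Set.Ioi k) < sSup (u '' Set.Iic k)}

/-- `Argmax u = {k : u k = V u}`. -/
noncomputable def Argmax (u : ℕ → ℝ) : Set ℕ := {k | u k = V u}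

lemma L_le_sSup_Ioi (u : ℕ → ℝ) (hu : MemLambda u) (k : ℕ) :
    L u ≤ ((sSup (u '' Set.Ioi k) : ℝ) : EReal) := by
  apply Filter.limsup_le_of_le
  · isBoundedDefault
  · filter_upwards [Filter.eventually_ge_atTop (k + 1)] with j hj
    have hmem : u j ∈ u '' Set.Ioi k := ⟨j, by simpa using hj, rfl⟩
    have hb : BddAbove (u '' Set.Ioi k) := hu.mono (Set.image_subset_range u _)
    exact_mod_cast le_csSup hb hmem

/-- for u ∈ Λ, Δˢ_u ≠ ∅ iff some term of u is strictly above the limsup. -/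
theorem deltaS_nonempty_iff (u : ℕ → ℝ) (hu : MemLambda u) :
    (DeltaS u).Nonempty ↔ ∃ k : ℕ, L u < ((u k : ℝ) : EReal) := by
  constructor
  · rintro ⟨k, hk⟩
    have hfin : (u '' Set.Iic k).Finite := (Set.finite_Iic k).image u
    have hne : (u '' Set.Iic k).Nonempty := ⟨u k, ⟨k, Set.self_mem_Iic, rfl⟩⟩
    obtain ⟨m, -, hm⟩ := hne.csSup_mem hfin
    refine ⟨m, lt_of_le_of_lt (L_le_sSup_Ioi u hu k) ?_⟩
    rw [hm]
    exact_mod_cast hk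
  · rintro ⟨k, hk⟩
    obtain ⟨a, ha1, ha2⟩ := exists_between hk
    have haT : a < ⊤ := ha2.trans_le le_top
    have haB : (⊥ : EReal) < a := lt_of_le_of_lt bot_le ha1
    lift a to ℝ using ⟨haT.ne, haB.ne'⟩
    have hev : ∀ᶠ j in atTop, ((u j : ℝ) : EReal) < (a : EReal) :=
      Filter.eventually_lt_of_limsup_lt ha1
    obtain ⟨N, hN⟩ := hev.exists_forall_of_atTop
    refine ⟨max N k, ?_⟩
    have hb : BddAbove (u '' Set.Iic (max N k)) := hu.mono (Set.image_subset_range u _)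
    have h1 : sSup (u '' Set.Ioi (max N k)) ≤ a := by
      have hne' : (u '' Set.Ioi (max N k)).Nonempty :=
        ⟨u (max N k + 1), max N k + 1, by simp, rfl⟩
      apply csSup_le hne'
      rintro x ⟨j, hj, rfl⟩
      have : N ≤ j := le_trans (le_max_left N k) (le_of_lt hj)
      exact_mod_cast (hN j this).le
    have h2 : u k ≤ sSup (u '' Set.Iic (max N k)) :=
      le_csSup hb ⟨k, le_max_right N k, rfl⟩
    have hak : a < u k := by exact_mod_cast ha2
    exact lt_of_le_of_lt h1 (lt_of_lt_of_le hak h2)
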